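/- Let p be a prime with p ≡ 3 (mod 4) and let ε ∈ {1, −1}. Then X, Y ∈ M₂(ℤ) satisfy X² + Y² = εp·I if and only if one of the following holds for some integers: (i) X = [[t₁, t₂],[t₃, −t₁]] and Y = [[s₁, s₂],[s₃, −s₁]] with t₁² + t₂t₃ + s₁² + s₂s₃ = εp; (ii) X = t₁I and Y = [[t₄, t₂],[t₃, −t₄]] with t₁² + t₄² + t₂t₃ = εp; (iii) X = [[t₁, t₂],[t₃, −t₁]] and Y = t₄I with t₁² + t₄² + t₂t₃ = εp; (iv) X = [[t₁, t₂],[t₃, t₄]] and Y = [[t₄, −t₂],[−t₃, t₁]] with t₁² + t₄² + 2t₂t₃ = εp; (v) X = [[t₁, t₂],[t₃, −t₄]] and Y = [[t₄, t₂],[t₃, −t₁]] with t₁² + t₄² + 2t₂t₃ = εp. -/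

import Mathlib

lemma aux_dvd (p : ℕ) (hp : p.Prime) (hp4 : p % 4 = 3) (x y : ℤ)
    (h : (p:ℤ) ∣ x^2 + y^2) : (p:ℤ) ∣ x ∧ (p:ℤ) ∣ y := by
  haveI : Fact p.Prime := ⟨hp⟩
  have h0 : ((x : ZMod p))^2 + ((y : ZMod p))^2 = 0 := by
    have := (ZMod.intCast_zmod_eq_zero_iff_dvd _ p).mpr h
    push_cast at this
    exact this
  have hy : (y : ZMod p) = 0 := by
    by_contra hy
    exact ZMod.mod_four_ne_three_of_sq_eq_neg_sq' hy
      (show ((x:ZMod p))^2 = -((y:ZMod p))^2 by linear_combination h0) hp4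
  have hx : (x : ZMod p) = 0 := by
    have : ((x : ZMod p))^2 = 0 := by rw [hy] at h0; simpa using h0
    exact pow_eq_zero_iff (n := 2) (by norm_num) |>.mp this
  exact ⟨(ZMod.intCast_zmod_eq_zero_iff_dvd _ p).mp hx,
    (ZMod.intCast_zmod_eq_zero_iff_dvd _ p).mp hy⟩

lemma aux_tri (p : ℕ) (hp : p.Prime) (hp4 : p % 4 = 3) (x y : ℤ)
    (h : x^2 + y^2 = (p:ℤ)^2) : x = 0 ∨ x = p ∨ x = -p := by
  obtain ⟨hx, hy⟩ := aux_dvd p hp hp4 x y ⟨p, by linear_combination h⟩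
  obtain ⟨u, rfl⟩ := hx
  obtain ⟨v, rfl⟩ := hy
  have hp0 : (p:ℤ) ≠ 0 := by exact_mod_cast hp.ne_zero
  have h1 : u^2 + v^2 = 1 :=
    mul_left_cancel₀ (pow_ne_zero 2 hp0)
      (show (p:ℤ)^2*(u^2+v^2) = (p:ℤ)^2*1 by linear_combination h)
  have hu : u = 0 ∨ u = 1 ∨ u = -1 := by
    have h2 : u^2 ≤ 1 := by nlinarith [sq_nonneg v]
    have h3 : -1 ≤ u ∧ u ≤ 1 := by constructor <;> nlinarith
    omega
  rcases hu with rfl | rfl | rfl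
  · left; ring
  · right; left; ring
  · right; right; ring

lemma smul1 (t : ℤ) : t • (1 : Matrix (Fin 2) (Fin 2) ℤ) = !![t, 0; 0, t] := by
  ext i j; fin_cases i <;> fin_cases j <;> simp

set_option maxHeartbeats 1000000 in
theorem stmt_13 (p : ℕ) (hp : p.Prime) (hp4 : p % 4 = 3) (ε : ℤ) (hε : ε = 1 ∨ ε = -1)
    (X Y : Matrix (Fin 2) (Fin 2) ℤ) :
    X ^ 2 + Y ^ 2 = (ε * p) • (1 : Matrix (Fin 2) (Fin 2) ℤ) ↔
    ((∃ t₁ t₂ t₃ s₁ s₂ s₃ : ℤ, X = !![t₁, t₂; t₃, -t₁] ∧ Y = !![s₁, s₂; s₃, -s₁] ∧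
        t₁ ^ 2 + t₂ * t₃ + s₁ ^ 2 + s₂ * s₃ = ε * p) ∨
     (∃ t₁ t₂ t₃ t₄ : ℤ, X = t₁ • (1 : Matrix (Fin 2) (Fin 2) ℤ) ∧
        Y = !![t₄, t₂; t₃, -t₄] ∧ t₁ ^ 2 + t₄ ^ 2 + t₂ * t₃ = ε * p) ∨
     (∃ t₁ t₂ t₃ t₄ : ℤ, X = !![t₁, t₂; t₃, -t₁] ∧
        Y = t₄ • (1 : Matrix (Fin 2) (Fin 2) ℤ) ∧ t₁ ^ 2 + t₄ ^ 2 + t₂ * t₃ = ε * p) ∨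
     (∃ t₁ t₂ t₃ t₄ : ℤ, X = !![t₁, t₂; t₃, t₄] ∧ Y = !![t₄, -t₂; -t₃, t₁] ∧
        t₁ ^ 2 + t₄ ^ 2 + 2 * t₂ * t₃ = ε * p) ∨
     (∃ t₁ t₂ t₃ t₄ : ℤ, X = !![t₁, t₂; t₃, -t₄] ∧ Y = !![t₄, t₂; t₃, -t₁] ∧
        t₁ ^ 2 + t₄ ^ 2 + 2 * t₂ * t₃ = ε * p)) := by
  have hpz : (0:ℤ) < (p:ℤ) := by exact_mod_cast hp.pos
  constructor
  · intro h
    obtain ⟨a, b, c, d, rfl⟩ : ∃ a b c d, X = !![a, b; c, d] :=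
      ⟨_, _, _, _, Matrix.eta_fin_two X⟩
    obtain ⟨e, f, g, k, rfl⟩ : ∃ e f g k, Y = !![e, f; g, k] :=
      ⟨_, _, _, _, Matrix.eta_fin_two Y⟩
    have HE := Matrix.ext_iff.mpr h
    have E11 : a*a + b*c + (e*e + f*g) = ε*p := by
      have := HE 0 0
      simpa [pow_two, Matrix.mul_apply, Fin.sum_univ_two] using this
    have E12 : a*b + b*d + (e*f + f*k) = 0 := by
      have := HE 0 1
      simpa [pow_two, Matrix.mul_apply, Fin.sum_univ_two] using this
    have E21 : c*a + d*c + (g*e + k*g) = 0 := by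
      have := HE 1 0
      simpa [pow_two, Matrix.mul_apply, Fin.sum_univ_two] using this
    have E22 : c*b + d*d + (g*f + k*k) = ε*p := by
      have := HE 1 1
      simpa [pow_two, Matrix.mul_apply, Fin.sum_univ_two] using this
    by_cases hT : a + d = 0
    · by_cases hS : e + k = 0
      · -- case (i)
        have hd : d = -a := by linarith
        have hk : k = -e := by linarith
        exact Or.inl ⟨a, b, c, e, f, g, by rw [hd], by rw [hk],
          by linear_combination E11⟩
      · -- case (iii)
        have hd : d = -a := by linarith
        have hf : f = 0 := mul_left_cancel₀ hS
          (show (e+k)*f = (e+k)*0 by linear_combination E12 - b*hT)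
        have hg : g = 0 := mul_left_cancel₀ hS
          (show (e+k)*g = (e+k)*0 by linear_combination E21 - c*hT)
        have hk : e = k := mul_left_cancel₀ hS
          (show (e+k)*e = (e+k)*k by linear_combination E11 - E22 + (d-a)*hT)
        exact Or.inr (Or.inr (Or.inl ⟨a, b, c, e, by rw [hd],
          by rw [smul1, hf, hg, ← hk], by linear_combination E11 - g*hf⟩))
    · by_cases hS : e + k = 0
      · -- case (ii)
        have hk : k = -e := by linarith
        have hb : b = 0 := mul_left_cancel₀ hT
          (show (a+d)*b = (a+d)*0 by linear_combination E12 - f*hS)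
        have hc : c = 0 := mul_left_cancel₀ hT
          (show (a+d)*c = (a+d)*0 by linear_combination E21 - g*hS)
        have had : a = d := mul_left_cancel₀ hT
          (show (a+d)*a = (a+d)*d by linear_combination E11 - E22 + (k-e)*hS)
        exact Or.inr (Or.inl ⟨a, f, g, e, by rw [smul1, hb, hc, ← had],
          by rw [hk], by linear_combination E11 - c*hb⟩)
      · -- main case
        have h2T : (2*(a+d) : ℤ) ≠ 0 := mul_ne_zero two_ne_zero hT
        have h2S : (2*(e+k) : ℤ) ≠ 0 := mul_ne_zero two_ne_zero hS
        have Q1 : 2*(e+k)*e = ((a+d)^2+(e+k)^2) - 2*(a+d)*a := by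
          linear_combination E11 - E22
        have Q2 : 2*(e+k)*k = ((a+d)^2+(e+k)^2) - 2*(a+d)*d := by
          linear_combination E22 - E11
        have Q3 : (e+k)*f = -((a+d)*b) := by linear_combination E12
        have Q4 : (e+k)*g = -((a+d)*c) := by linear_combination E21
        have P1 : 2*(a+d)*a = ((a+d)^2+(e+k)^2) - 2*(e+k)*e := by
          linear_combination Q1
        have P2 : 2*(a+d)*d = ((a+d)^2+(e+k)^2) - 2*(e+k)*k := by
          linear_combination Q2
        have hG0 : (a+d)^2+(e+k)^2 =
            2*(ε*p) + 2*(a*d - b*c) + 2*(e*k - f*g) := by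
          linear_combination E11 + E22
        have hG1 : 4*(e+k)^2*(e*k - f*g) =
            ((a+d)^2+(e+k)^2)^2 - 2*((a+d)^2+(e+k)^2)*(a+d)^2
              + 4*(a+d)^2*(a*d - b*c) := by
          linear_combination (2*(e+k)*k)*Q1 + (((a+d)^2+(e+k)^2) - 2*(a+d)*a)*Q2
            - 4*((e+k)*g)*Q3 + 4*((a+d)*b)*Q4
        have hG1' : 4*(a+d)^2*(a*d - b*c) =
            ((a+d)^2+(e+k)^2)^2 - 2*((a+d)^2+(e+k)^2)*(e+k)^2
              + 4*(e+k)^2*(e*k - f*g) := by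
          linear_combination (2*(a+d)*d)*P1 + (((a+d)^2+(e+k)^2) - 2*(e+k)*e)*P2
            - 4*((a+d)*c)*Q3 + 4*((e+k)*f)*Q4
        have h2 : 4*((a+d)^2+(e+k)^2)*(e*k - f*g) =
            ((a+d)^2+(e+k)^2)^2 - 4*(a+d)^2*(ε*p) := by
          linear_combination hG1 - 2*(a+d)^2*hG0
        have h1 : 4*((a+d)^2+(e+k)^2)*(a*d - b*c) =
            ((a+d)^2+(e+k)^2)^2 - 4*(e+k)^2*(ε*p) := by
          linear_combination hG1' - 2*(e+k)^2*hG0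
        have hB1 : 2*(e+k)*(a*k + e*d - b*g - f*c) =
            (a+d)*(((a+d)^2+(e+k)^2) - 4*(a*d - b*c)) := by
          linear_combination a*Q2 + d*Q1 - 2*b*Q4 - 2*c*Q3
        have hsB : ((a+d)^2+(e+k)^2)*(a*k + e*d - b*g - f*c) =
            2*(a+d)*(e+k)*(ε*p) :=
          mul_left_cancel₀ h2S (by
            linear_combination ((a+d)^2+(e+k)^2)*hB1 - (a+d)*h1)
        have hsD : ((a+d)^2+(e+k)^2)*((a*d-b*c) - (e*k-f*g)) =
            (ε*p)*((a+d)^2 - (e+k)^2) :=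
          mul_left_cancel₀ (by norm_num : (4:ℤ) ≠ 0) (by
            linear_combination h1 - h2)
        have hs0 : ((a+d)^2+(e+k)^2 : ℤ) ≠ 0 := by positivity
        have hG2 : ((a*d-b*c) - (e*k-f*g))^2 + (a*k + e*d - b*g - f*c)^2
            = (ε*p)^2 :=
          mul_left_cancel₀ (pow_ne_zero 2 hs0) (by
            linear_combination
              (((a+d)^2+(e+k)^2)*((a*d-b*c) - (e*k-f*g)) + (ε*p)*((a+d)^2-(e+k)^2))*hsD
              + (((a+d)^2+(e+k)^2)*(a*k + e*d - b*g - f*c) + 2*(a+d)*(e+k)*(ε*p))*hsB)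
        have hw2 : (ε*(p:ℤ))^2 = (p:ℤ)^2 := by rcases hε with rfl | rfl <;> ring
        have hD3 := aux_tri p hp hp4 ((a*d-b*c) - (e*k-f*g)) (a*k + e*d - b*g - f*c)
          (by rw [hG2, hw2])
        have hT2 : (0:ℤ) < (a+d)^2 := by positivity
        have hS2 : (0:ℤ) < (e+k)^2 := by positivity
        rcases hD3 with hD | hD | hD
        · -- D = 0, so S² = T²
          have hTS : ((e+k) - (a+d)) * ((e+k) + (a+d)) = 0 := by
            have h5 : (ε*(p:ℤ))*((a+d)^2 - (e+k)^2) = 0 := by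
              rw [← hsD, hD, mul_zero]
            have hwne : (ε*(p:ℤ)) ≠ 0 := by
              rcases hε with rfl | rfl <;> simp [hpz.ne', hp.ne_zero]
            have := (mul_eq_zero.mp h5).resolve_left hwne
            linear_combination -this
          rcases mul_eq_zero.mp hTS with hST | hST
          · -- S = T : case (iv)
            have hf : f = -b := mul_left_cancel₀ hT (by linear_combination Q3 - f*hST)
            have hg : g = -c := mul_left_cancel₀ hT (by linear_combination Q4 - g*hST)
            have he : e = d := mul_left_cancel₀ h2T
              (by linear_combination Q1 + (-2*e + (e+k) + (a+d))*hST)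
            have hk : k = a := mul_left_cancel₀ h2T
              (by linear_combination Q2 + (-2*k + (e+k) + (a+d))*hST)
            exact Or.inr (Or.inr (Or.inr (Or.inl ⟨a, b, c, d, rfl,
              by rw [hf, hg, he, hk],
              by linear_combination E11 - (e+d)*he - g*hf + b*hg⟩)))
          · -- S = -T : case (v)
            have hf : f = b := mul_left_cancel₀ hT (by linear_combination -Q3 + f*hST)
            have hg : g = c := mul_left_cancel₀ hT (by linear_combination -Q4 + g*hST)
            have he : e = -d := mul_left_cancel₀ h2T
              (by linear_combination -Q1 + (2*e + (a+d) - (e+k))*hST)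
            have hk : k = -a := mul_left_cancel₀ h2T
              (by linear_combination -Q2 + (2*k + (a+d) - (e+k))*hST)
            exact Or.inr (Or.inr (Or.inr (Or.inr ⟨a, b, c, -d,
              by norm_num, by rw [hf, hg, he, hk],
              by linear_combination E11 - (e-d)*he - g*hf - b*hg⟩)))
        · exfalso
          rw [hD] at hsD
          have hcan : ((a+d)^2+(e+k)^2) = ε*((a+d)^2-(e+k)^2) :=
            mul_right_cancel₀ hpz.ne'
              (show ((a+d)^2+(e+k)^2) * (p:ℤ) = (ε*((a+d)^2-(e+k)^2)) * (p:ℤ) by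
                linear_combination hsD)
          rcases hε with rfl | rfl
          · exact hS (pow_eq_zero_iff two_ne_zero |>.mp
              (show (e+k)^2 = 0 by linarith))
          · exact hT (pow_eq_zero_iff two_ne_zero |>.mp
              (show (a+d)^2 = 0 by linarith))
        · exfalso
          rw [hD] at hsD
          have hcan : -((a+d)^2+(e+k)^2) = ε*((a+d)^2-(e+k)^2) :=
            mul_right_cancel₀ hpz.ne'
              (show -((a+d)^2+(e+k)^2) * (p:ℤ) = (ε*((a+d)^2-(e+k)^2)) * (p:ℤ) by
                linear_combination hsD)
          rcases hε with rfl | rfl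
          · exact hT (pow_eq_zero_iff two_ne_zero |>.mp
              (show (a+d)^2 = 0 by linarith))
          · exact hS (pow_eq_zero_iff two_ne_zero |>.mp
              (show (e+k)^2 = 0 by linarith))
  · rintro (⟨t₁, t₂, t₃, s₁, s₂, s₃, rfl, rfl, hc⟩ | ⟨t₁, t₂, t₃, t₄, rfl, rfl, hc⟩ |
      ⟨t₁, t₂, t₃, t₄, rfl, rfl, hc⟩ | ⟨t₁, t₂, t₃, t₄, rfl, rfl, hc⟩ |
      ⟨t₁, t₂, t₃, t₄, rfl, rfl, hc⟩) <;>
    · rw [smul1]; ext i j; fin_cases i <;> fin_cases j <;>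
        simp [pow_two, Matrix.mul_apply, Fin.sum_univ_two] <;>
        first | linear_combination hc | ring
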